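/- Let G be a C_3□P_2-free graph and let v_1,...,v_6 be six distinct vertices of G such that v_i and v_j are adjacent whenever 1 ≤ |i−j| ≤ 2 (a copy of P_6^2). Then every vertex v of G outside {v_1,...,v_6} has at most 4 neighbors in {v_1,...,v_6}; moreover, if v has exactly 4 neighbors there, then its neighbor set in {v_1,...,v_6} is one of the six sets {v_1,v_2,v_3,v_4}, {v_3,v_4,v_5,v_6}, {v_2,v_3,v_4,v_5}, {v_1,v_3,v_4,v_6}, {v_1,v_3,v_5,v_6}, {v_1,v_2,v_4,v_6}. -/
import Mathlib


open SimpleGraph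

/-- `CopyIn H G` means `G` contains a subgraph isomorphic to `H`,
i.e. there is an injective graph homomorphism from `H` to `G`. -/
def CopyIn {α β : Type*} (H : SimpleGraph α) (G : SimpleGraph β) : Prop :=
  ∃ f : α ↪ β, ∀ a b, H.Adj a b → G.Adj (f a) (f b)

/-- The Turán number `ex(n, H)`: the maximum number of edges in an
`H`-free graph on `n` vertices. -/
noncomputable def exNum {α : Type*} (n : ℕ) (H : SimpleGraph α) : ℕ :=
  sSup {m : ℕ | ∃ G : SimpleGraph (Fin n), ¬ CopyIn H G ∧ G.edgeSet.ncard = m}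

/-- The odd prism `C_{2k+1} □ P_2`. -/
def oddPrism (k : ℕ) : SimpleGraph (Fin (2 * k + 1) × Fin 2) :=
  cycleGraph (2 * k + 1) □ pathGraph 2

/-- `P_6^2`, the square of the path on six vertices: `i` and `j` are adjacent
iff `1 ≤ |i - j| ≤ 2`. -/
def pathSq6 : SimpleGraph (Fin 6) :=
  SimpleGraph.fromRel (fun i j => (i : ℕ) < (j : ℕ) ∧ (j : ℕ) ≤ (i : ℕ) + 2)

/-- Decidable version of adjacency in `P_6²`. -/
def edg (i j : Fin 6) : Prop :=
  i ≠ j ∧ ((i : ℕ) < j ∧ (j : ℕ) ≤ (i : ℕ) + 2 ∨ (j : ℕ) < i ∧ (i : ℕ) ≤ (j : ℕ) + 2)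

instance : ∀ i j, Decidable (edg i j) := fun i j => by unfold edg; infer_instance

lemma edg_adj {i j : Fin 6} (h : edg i j) : pathSq6.Adj i j := by
  obtain ⟨hne, h⟩ := h
  exact (SimpleGraph.fromRel_adj _ i j).mpr ⟨hne, h⟩

set_option maxRecDepth 100000 in
set_option maxHeartbeats 4000000 in
/-- The combinatorial core: every "bad" subset of `Fin 6` contains a
prism-forcing configuration. -/
lemma comb (F : Finset (Fin 6))
    (h : 5 ≤ F.card ∨ (F.card = 4 ∧ F ≠ {0,1,2,3} ∧ F ≠ {2,3,4,5} ∧ F ≠ {1,2,3,4} ∧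
          F ≠ {0,2,3,5} ∧ F ≠ {0,2,4,5} ∧ F ≠ {0,1,3,5})) :
    ∃ a b c d e : Fin 6, ([a,b,c,d,e] : List (Fin 6)).Nodup ∧ edg a b ∧ edg a c ∧ edg b c ∧
      edg d e ∧ edg a d ∧ edg b e ∧ c ∈ F ∧ d ∈ F ∧ e ∈ F := by
  revert h; revert F; decide

/-- From a prism-forcing configuration one builds a copy of `C₃ □ P₂`. -/
lemma build_prism {V : Type*} (G : SimpleGraph V) (hfree : ¬ CopyIn (oddPrism 1) G)
    (v : Fin 6 ↪ V) (hv : ∀ i j, pathSq6.Adj i j → G.Adj (v i) (v j))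
    (w : V) (hw : w ∉ Set.range v) (a b c d e : Fin 6)
    (hnd : ([a,b,c,d,e] : List (Fin 6)).Nodup)
    (hab : edg a b) (hac : edg a c) (hbc : edg b c) (hde : edg d e)
    (had : edg a d) (hbe : edg b e)
    (hc : G.Adj w (v c)) (hd : G.Adj w (v d)) (he : G.Adj w (v e)) : False := by
  simp only [List.nodup_cons, List.mem_cons, List.mem_singleton, List.not_mem_nil,
    or_false, not_or, List.nodup_nil, and_true] at hnd
  obtain ⟨⟨hab', hac', had', hae'⟩, ⟨hbc', hbd', hbe'⟩, ⟨hcd', hce'⟩, hde'⟩ := hnd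
  have hwv : ∀ i : Fin 6, w ≠ v i := fun i h => hw ⟨i, h.symm⟩
  have Gab := hv a b (edg_adj hab)
  have Gac := hv a c (edg_adj hac)
  have Gbc := hv b c (edg_adj hbc)
  have Gde := hv d e (edg_adj hde)
  have Gad := hv a d (edg_adj had)
  have Gbe := hv b e (edg_adj hbe)
  apply hfree
  refine ⟨⟨fun x => ![![v a, v d], ![v b, v e], ![v c, w]] x.1 x.2, ?_⟩, ?_⟩
  · intro x y hxy
    have vi := v.injective
    fin_cases x <;> fin_cases y <;> simp_all
  · intro x y hxy
    fin_cases x <;> fin_cases y <;>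
      simp only [oddPrism, boxProd_adj, cycleGraph_adj, pathGraph_adj] at hxy <;>
      simp <;>
      first
      | exact Gab | exact Gac | exact Gbc | exact Gde | exact Gad | exact Gbe
      | exact Gab.symm | exact Gac.symm | exact Gbc.symm | exact Gde.symm
      | exact Gad.symm | exact Gbe.symm
      | exact hc | exact hd | exact he
      | exact hc.symm | exact hd.symm | exact he.symm
      | (exfalso; revert hxy; decide)

/-- Let `G` be `C_3□P_2`-free and let `v : Fin 6 ↪ V` be a copy of
`P_6²` in `G`. Every vertex outside the copy has at most `4` neighbors among
`v_1, …, v_6`, and if it has exactly `4`, its neighbor set there is one of six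
listed sets. -/
theorem neighbors_of_P6sq_copy {V : Type*} (G : SimpleGraph V)
    (hfree : ¬ CopyIn (oddPrism 1) G)
    (v : Fin 6 ↪ V) (hv : ∀ i j, pathSq6.Adj i j → G.Adj (v i) (v j)) :
    ∀ w, w ∉ Set.range v →
      {i : Fin 6 | G.Adj w (v i)}.ncard ≤ 4 ∧
      ({i : Fin 6 | G.Adj w (v i)}.ncard = 4 →
        {i : Fin 6 | G.Adj w (v i)} ∈
          ({{0, 1, 2, 3}, {2, 3, 4, 5}, {1, 2, 3, 4},
            {0, 2, 3, 5}, {0, 2, 4, 5}, {0, 1, 3, 5}} : Set (Set (Fin 6)))) := by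
  classical
  intro w hw
  set F : Finset (Fin 6) := Finset.univ.filter (fun i => G.Adj w (v i)) with hF
  have hSet : {i : Fin 6 | G.Adj w (v i)} = ↑F := by ext i; simp [hF]
  have key : ¬ (5 ≤ F.card ∨ (F.card = 4 ∧ F ≠ {0,1,2,3} ∧ F ≠ {2,3,4,5} ∧ F ≠ {1,2,3,4} ∧
          F ≠ {0,2,3,5} ∧ F ≠ {0,2,4,5} ∧ F ≠ {0,1,3,5})) := by
    intro h
    obtain ⟨a,b,c,d,e, hnd, hab, hac, hbc, hde, had, hbe, hcF, hdF, heF⟩ := comb F h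
    have hc : G.Adj w (v c) := by simpa [hF] using hcF
    have hd : G.Adj w (v d) := by simpa [hF] using hdF
    have he : G.Adj w (v e) := by simpa [hF] using heF
    exact build_prism G hfree v hv w hw a b c d e hnd hab hac hbc hde had hbe hc hd he
  push_neg at key
  obtain ⟨hle, h4imp⟩ := key
  constructor
  · rw [hSet, Set.ncard_coe_finset]; omega
  · intro hcard
    rw [hSet, Set.ncard_coe_finset] at hcard
    rw [hSet]
    by_cases h1 : F = {0,1,2,3}
    · exact Or.inl (by rw [h1]; simp)
    by_cases h2 : F = {2,3,4,5}
    · exact Or.inr (Or.inl (by rw [h2]; simp))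
    by_cases h3 : F = {1,2,3,4}
    · exact Or.inr (Or.inr (Or.inl (by rw [h3]; simp)))
    by_cases h4 : F = {0,2,3,5}
    · exact Or.inr (Or.inr (Or.inr (Or.inl (by rw [h4]; simp))))
    by_cases h5 : F = {0,2,4,5}
    · exact Or.inr (Or.inr (Or.inr (Or.inr (Or.inl (by rw [h5]; simp)))))
    by_cases h6 : F = {0,1,3,5}
    · exact Or.inr (Or.inr (Or.inr (Or.inr (Or.inr (by rw [h6]; simp)))))
    exact absurd (h4imp hcard h1 h2 h3 h4 h5) h6
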